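/- Fix integers n > r ≥ 0 and let F be a field. (i) For every p ∈ P_{r,n−r} there exist u ∈ U_r and g' ∈ G'_{n−r} such that p ∈ R_r u g' (i.e., R_r p = R_r u g' as right cosets). (ii) If u₁, u₂ ∈ U_r and g'₁, g'₂ ∈ G'_{n−r} satisfy R_r u₁ g'₁ = R_r u₂ g'₂, then u₁ = u₂ and g'₁ (g'₂)^{-1} ∈ N'_{n−r}. (In other words, the map U_r × (N'_{n−r}\G'_{n−r}) → R_r\P_{r,n−r}, (u, N'_{n−r} g') ↦ R_r u g', is a well-defined bijection.) -/

import Mathlib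

open Matrix

/-- The Rankin–Selberg subgroup `R_r ⊆ GL_n(F)`: block matrices `[g, u; 0, h]` with
`g ∈ GL_r(F)`, `h ∈ N_{n-r}(F)` upper-triangular unipotent, and `u` an `r × (n-r)` matrix
whose first column (the column of index `r`) is zero. -/
def RSgroup (n r : ℕ) (F : Type*) [Field F] : Set (GL (Fin n) F) :=
  {g | (∀ i j : Fin n, r ≤ (i : ℕ) → (j : ℕ) < (i : ℕ) →
          (g : Matrix (Fin n) (Fin n) F) i j = 0) ∧
       (∀ i : Fin n, r ≤ (i : ℕ) → (g : Matrix (Fin n) (Fin n) F) i i = 1) ∧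
       (∀ i j : Fin n, (i : ℕ) < r → (j : ℕ) = r → (g : Matrix (Fin n) (Fin n) F) i j = 0)}

/-- The parabolic subgroup `P_{r,n-r} ⊆ GL_n(F)` of block upper-triangular matrices
`[g, u; 0, h]`. -/
def Parab (n r : ℕ) (F : Type*) [Field F] : Set (GL (Fin n) F) :=
  {g | ∀ i j : Fin n, r ≤ (i : ℕ) → (j : ℕ) < r → (g : Matrix (Fin n) (Fin n) F) i j = 0}

/-- The subgroup `U_r ⊆ GL_n(F)` of block matrices `[1_r, u; 0, 1_{n-r}]` where all columns
of `u` except possibly the first one (the column of index `r`) vanish. -/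
def Ugroup (n r : ℕ) (F : Type*) [Field F] : Set (GL (Fin n) F) :=
  {g | (∀ i : Fin n, (g : Matrix (Fin n) (Fin n) F) i i = 1) ∧
       (∀ i j : Fin n, i ≠ j → ¬((i : ℕ) < r ∧ (j : ℕ) = r) →
          (g : Matrix (Fin n) (Fin n) F) i j = 0)}

/-- The image `G'_{n-r}` of `GL_{n-r}(F)` in `GL_n(F)` under `g ↦ diag(1_r, g)`. -/
def Ggroup' (n r : ℕ) (F : Type*) [Field F] : Set (GL (Fin n) F) :=
  {g | ∀ i j : Fin n, ((i : ℕ) < r ∨ (j : ℕ) < r) →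
        (g : Matrix (Fin n) (Fin n) F) i j = if i = j then 1 else 0}

/-- The image `N'_{n-r}` of `N_{n-r}(F)` in `GL_n(F)` under `g ↦ diag(1_r, g)`. -/
def Ngroup' (n r : ℕ) (F : Type*) [Field F] : Set (GL (Fin n) F) :=
  {g | (∀ i : Fin n, (g : Matrix (Fin n) (Fin n) F) i i = 1) ∧
       (∀ i j : Fin n, i ≠ j → ¬(r ≤ (i : ℕ) ∧ (i : ℕ) < (j : ℕ)) →
          (g : Matrix (Fin n) (Fin n) F) i j = 0)}

set_option linter.unusedSectionVars false

namespace RSaux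

variable (r m : ℕ) (F : Type*) [Field F]

noncomputable def Φ : Matrix (Fin (r+m)) (Fin (r+m)) F ≃ₐ[F]
    Matrix (Fin r ⊕ Fin m) (Fin r ⊕ Fin m) F :=
  Matrix.reindexAlgEquiv F F finSumFinEquiv.symm

variable {r m F}

lemma Φ_apply (M : Matrix (Fin (r+m)) (Fin (r+m)) F) (x y : Fin r ⊕ Fin m) :
    Φ r m F M x y = M (finSumFinEquiv x) (finSumFinEquiv y) := by
  simp [Φ, Matrix.reindexAlgEquiv_apply, Matrix.reindex_apply]

lemma Φ11 (M : Matrix (Fin (r+m)) (Fin (r+m)) F) (a b : Fin r) :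
    toBlocks₁₁ (Φ r m F M) a b = M (Fin.castAdd m a) (Fin.castAdd m b) := by
  simp [toBlocks₁₁, Φ_apply]

lemma Φ12 (M : Matrix (Fin (r+m)) (Fin (r+m)) F) (a : Fin r) (b : Fin m) :
    toBlocks₁₂ (Φ r m F M) a b = M (Fin.castAdd m a) (Fin.natAdd r b) := by
  simp [toBlocks₁₂, Φ_apply]

lemma Φ21 (M : Matrix (Fin (r+m)) (Fin (r+m)) F) (a : Fin m) (b : Fin r) :
    toBlocks₂₁ (Φ r m F M) a b = M (Fin.natAdd r a) (Fin.castAdd m b) := by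
  simp [toBlocks₂₁, Φ_apply]

lemma Φ22 (M : Matrix (Fin (r+m)) (Fin (r+m)) F) (a b : Fin m) :
    toBlocks₂₂ (Φ r m F M) a b = M (Fin.natAdd r a) (Fin.natAdd r b) := by
  simp [toBlocks₂₂, Φ_apply]

lemma fin_cases' (i : Fin (r+m)) :
    (∃ a : Fin r, i = Fin.castAdd m a) ∨ (∃ b : Fin m, i = Fin.natAdd r b) := by
  rcases lt_or_ge (i : ℕ) r with h | h
  · exact Or.inl ⟨⟨i, h⟩, by apply Fin.ext; simp⟩
  · exact Or.inr ⟨⟨(i : ℕ) - r, by omega⟩, by apply Fin.ext; simp; omega⟩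

lemma natAdd_inj {a b : Fin m} : Fin.natAdd r a = Fin.natAdd r b ↔ a = b := by
  simp [Fin.ext_iff]

lemma castAdd_ne_natAdd (a : Fin r) (b : Fin m) :
    Fin.castAdd m a ≠ Fin.natAdd r b := by
  have := a.isLt
  simp only [ne_eq, Fin.ext_iff, Fin.coe_castAdd, Fin.coe_natAdd]; omega

lemma natAdd_ne_castAdd (a : Fin m) (b : Fin r) :
    Fin.natAdd r a ≠ Fin.castAdd m b := by
  have := b.isLt
  simp only [ne_eq, Fin.ext_iff, Fin.coe_castAdd, Fin.coe_natAdd]; omega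

lemma blocks_of_eq {A A' : Matrix (Fin r) (Fin r) F} {B B' : Matrix (Fin r) (Fin m) F}
    {C C' : Matrix (Fin m) (Fin r) F} {D D' : Matrix (Fin m) (Fin m) F}
    (h : fromBlocks A B C D = fromBlocks A' B' C' D') :
    A = A' ∧ B = B' ∧ C = C' ∧ D = D' := by
  refine ⟨?_, ?_, ?_, ?_⟩
  · simpa using congrArg toBlocks₁₁ h
  · simpa using congrArg toBlocks₁₂ h
  · simpa using congrArg toBlocks₂₁ h
  · simpa using congrArg toBlocks₂₂ h

lemma blocks_of_eq_one {A : Matrix (Fin r) (Fin r) F} {B : Matrix (Fin r) (Fin m) F}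
    {C : Matrix (Fin m) (Fin r) F} {D : Matrix (Fin m) (Fin m) F}
    (h : fromBlocks A B C D = 1) :
    A = 1 ∧ B = 0 ∧ C = 0 ∧ D = 1 := by
  rw [← fromBlocks_one] at h; exact blocks_of_eq h


lemma entry11 {M : Matrix (Fin (r+m)) (Fin (r+m)) F} {A : Matrix (Fin r) (Fin r) F}
    {B : Matrix (Fin r) (Fin m) F} {C : Matrix (Fin m) (Fin r) F} {D : Matrix (Fin m) (Fin m) F}
    (h : Φ r m F M = fromBlocks A B C D) (a b : Fin r) :
    M (Fin.castAdd m a) (Fin.castAdd m b) = A a b := by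
  rw [← Φ11 M a b, h, toBlocks_fromBlocks₁₁]

lemma entry12 {M : Matrix (Fin (r+m)) (Fin (r+m)) F} {A : Matrix (Fin r) (Fin r) F}
    {B : Matrix (Fin r) (Fin m) F} {C : Matrix (Fin m) (Fin r) F} {D : Matrix (Fin m) (Fin m) F}
    (h : Φ r m F M = fromBlocks A B C D) (a : Fin r) (b : Fin m) :
    M (Fin.castAdd m a) (Fin.natAdd r b) = B a b := by
  rw [← Φ12 M a b, h, toBlocks_fromBlocks₁₂]

lemma entry21 {M : Matrix (Fin (r+m)) (Fin (r+m)) F} {A : Matrix (Fin r) (Fin r) F}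
    {B : Matrix (Fin r) (Fin m) F} {C : Matrix (Fin m) (Fin r) F} {D : Matrix (Fin m) (Fin m) F}
    (h : Φ r m F M = fromBlocks A B C D) (a : Fin m) (b : Fin r) :
    M (Fin.natAdd r a) (Fin.castAdd m b) = C a b := by
  rw [← Φ21 M a b, h, toBlocks_fromBlocks₂₁]

lemma entry22 {M : Matrix (Fin (r+m)) (Fin (r+m)) F} {A : Matrix (Fin r) (Fin r) F}
    {B : Matrix (Fin r) (Fin m) F} {C : Matrix (Fin m) (Fin r) F} {D : Matrix (Fin m) (Fin m) F}
    (h : Φ r m F M = fromBlocks A B C D) (a b : Fin m) :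
    M (Fin.natAdd r a) (Fin.natAdd r b) = D a b := by
  rw [← Φ22 M a b, h, toBlocks_fromBlocks₂₂]

def UT (K : Matrix (Fin m) (Fin m) F) : Prop :=
  (∀ a, K a a = 1) ∧ ∀ a b : Fin m, b < a → K a b = 0

def colM (m : ℕ) [NeZero m] (c : Fin r → F) : Matrix (Fin r) (Fin m) F :=
  Matrix.of fun i j => if j = 0 then c i else 0

variable [NeZero m]

lemma mul_colM (M : Matrix (Fin r) (Fin r) F) (c : Fin r → F) :
    M * colM m c = colM m (fun a => ∑ k, M a k * c k) := by
  ext i j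
  by_cases h : j = 0
  · subst h; simp [colM, mul_apply]
  · simp [colM, mul_apply, h]

lemma colM_mul_col0 (c : Fin r → F) (K : Matrix (Fin m) (Fin m) F) (i : Fin r) :
    (colM m c * K) i 0 = c i * K 0 0 := by
  simp [colM, mul_apply, ite_mul, Finset.sum_ite_eq]

/-! ### Membership characterizations -/

lemma mem_Ugroup_iff {u : GL (Fin (r+m)) F} :
    u ∈ Ugroup (r+m) r F ↔
      ∃ c : Fin r → F, Φ r m F (u : Matrix (Fin (r+m)) (Fin (r+m)) F)
        = fromBlocks 1 (colM m c) 0 1 := by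
  constructor
  · rintro ⟨h1, h2⟩
    refine ⟨fun a => (u : Matrix (Fin (r+m)) (Fin (r+m)) F) (Fin.castAdd m a)
      (Fin.natAdd r 0), ?_⟩
    ext x y
    rcases x with a | a <;> rcases y with b | b <;> rw [Φ_apply]
    · rw [finSumFinEquiv_apply_left, finSumFinEquiv_apply_left, fromBlocks_apply₁₁]
      by_cases hab : a = b
      · subst hab; rw [h1, one_apply_eq]
      · rw [one_apply_ne hab, h2]
        · simpa [Fin.ext_iff] using hab
        · have := b.isLt; simp only [Fin.coe_castAdd]; omega
    · rw [finSumFinEquiv_apply_left, finSumFinEquiv_apply_right, fromBlocks_apply₁₂]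
      by_cases hb : b = 0
      · subst hb; simp [colM]
      · rw [colM, of_apply, if_neg hb, h2 _ _ (castAdd_ne_natAdd a b)]
        have hb' : (b : ℕ) ≠ 0 := Fin.val_ne_zero_iff.mpr hb
        simp only [Fin.coe_castAdd, Fin.coe_natAdd]
        omega
    · rw [finSumFinEquiv_apply_right, finSumFinEquiv_apply_left, fromBlocks_apply₂₁,
        h2 _ _ (natAdd_ne_castAdd a b)]
      · rfl
      · have := b.isLt; simp only [Fin.coe_castAdd, Fin.coe_natAdd]; omega
    · rw [finSumFinEquiv_apply_right, finSumFinEquiv_apply_right, fromBlocks_apply₂₂]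
      by_cases hab : a = b
      · subst hab; rw [h1, one_apply_eq]
      · rw [one_apply_ne hab, h2]
        · simpa [natAdd_inj] using hab
        · simp only [Fin.coe_natAdd]; omega
  · rintro ⟨c, hc⟩
    constructor
    · intro i
      rcases fin_cases' i with ⟨a, rfl⟩ | ⟨b, rfl⟩
      · rw [entry11 hc, one_apply_eq]
      · rw [entry22 hc, one_apply_eq]
    · intro i j hij hcond
      rcases fin_cases' i with ⟨a, rfl⟩ | ⟨a, rfl⟩ <;>
        rcases fin_cases' j with ⟨b, rfl⟩ | ⟨b, rfl⟩
      · rw [entry11 hc]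
        exact one_apply_ne (by simpa [Fin.ext_iff] using hij)
      · rw [entry12 hc]
        simp only [colM, of_apply]
        rw [if_neg]
        intro hb0
        subst hb0
        exact hcond ⟨a.isLt, by simp⟩
      · rw [entry21 hc]; rfl
      · rw [entry22 hc]
        exact one_apply_ne (by simpa [natAdd_inj] using hij)

lemma mem_Ggroup'_iff {g : GL (Fin (r+m)) F} :
    g ∈ Ggroup' (r+m) r F ↔
      ∃ D : Matrix (Fin m) (Fin m) F,
        Φ r m F (g : Matrix (Fin (r+m)) (Fin (r+m)) F) = fromBlocks 1 0 0 D := by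
  constructor
  · intro h
    refine ⟨toBlocks₂₂ (Φ r m F (g : Matrix (Fin (r+m)) (Fin (r+m)) F)), ?_⟩
    ext x y
    rcases x with a | a <;> rcases y with b | b <;> rw [Φ_apply]
    · rw [finSumFinEquiv_apply_left, finSumFinEquiv_apply_left, fromBlocks_apply₁₁,
        h _ _ (Or.inl (by simpa using a.isLt))]
      by_cases hab : a = b
      · subst hab; simp
      · rw [if_neg (by simpa [Fin.ext_iff] using hab), one_apply_ne hab]
    · rw [finSumFinEquiv_apply_left, finSumFinEquiv_apply_right, fromBlocks_apply₁₂,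
        h _ _ (Or.inl (by simpa using a.isLt)), if_neg (castAdd_ne_natAdd a b)]
      rfl
    · rw [finSumFinEquiv_apply_right, finSumFinEquiv_apply_left, fromBlocks_apply₂₁,
        h _ _ (Or.inr (by simpa using b.isLt)), if_neg (natAdd_ne_castAdd a b)]
      rfl
    · rw [finSumFinEquiv_apply_right, finSumFinEquiv_apply_right, fromBlocks_apply₂₂, Φ22]
  · rintro ⟨D, hD⟩
    intro i j hij
    rcases fin_cases' i with ⟨a, rfl⟩ | ⟨a, rfl⟩ <;>
      rcases fin_cases' j with ⟨b, rfl⟩ | ⟨b, rfl⟩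
    · rw [entry11 hD]
      by_cases hab : a = b
      · subst hab; simp
      · rw [one_apply_ne hab, if_neg (by simpa [Fin.ext_iff] using hab)]
    · rw [entry12 hD, if_neg (castAdd_ne_natAdd a b)]; rfl
    · rw [entry21 hD, if_neg (natAdd_ne_castAdd a b)]; rfl
    · exfalso
      have ha := a.isLt; have hb := b.isLt
      rcases hij with h | h <;> simp only [Fin.coe_natAdd] at h <;> omega

lemma mem_RSgroup_iff {g : GL (Fin (r+m)) F} :
    g ∈ RSgroup (r+m) r F ↔
      toBlocks₂₁ (Φ r m F (g : Matrix (Fin (r+m)) (Fin (r+m)) F)) = 0 ∧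
      UT (toBlocks₂₂ (Φ r m F (g : Matrix (Fin (r+m)) (Fin (r+m)) F))) ∧
      ∀ a : Fin r, toBlocks₁₂ (Φ r m F (g : Matrix (Fin (r+m)) (Fin (r+m)) F)) a 0 = 0 := by
  constructor
  · rintro ⟨h1, h2, h3⟩
    refine ⟨?_, ⟨?_, ?_⟩, ?_⟩
    · ext a b
      rw [Φ21, h1]
      · rfl
      · simp
      · have := b.isLt; simp only [Fin.coe_castAdd, Fin.coe_natAdd]; omega
    · intro a
      rw [Φ22, h2]
      simp
    · intro a b hba
      rw [Φ22, h1]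
      · simp
      · simp only [Fin.coe_natAdd]
        have : (b : ℕ) < (a : ℕ) := hba
        omega
    · intro a
      rw [Φ12, h3]
      · simpa using a.isLt
      · simp
  · rintro ⟨h1, ⟨h2, h3⟩, h4⟩
    have hg : Φ r m F (g : Matrix (Fin (r+m)) (Fin (r+m)) F) =
        fromBlocks (toBlocks₁₁ (Φ r m F (g : Matrix (Fin (r+m)) (Fin (r+m)) F)))
          (toBlocks₁₂ (Φ r m F (g : Matrix (Fin (r+m)) (Fin (r+m)) F)))
          (toBlocks₂₁ (Φ r m F (g : Matrix (Fin (r+m)) (Fin (r+m)) F)))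
          (toBlocks₂₂ (Φ r m F (g : Matrix (Fin (r+m)) (Fin (r+m)) F))) :=
      (fromBlocks_toBlocks _).symm
    refine ⟨?_, ?_, ?_⟩
    · intro i j hi hj
      rcases fin_cases' i with ⟨a, rfl⟩ | ⟨a, rfl⟩
      · exfalso; have := a.isLt; simp only [Fin.coe_castAdd] at hi; omega
      · rcases fin_cases' j with ⟨b, rfl⟩ | ⟨b, rfl⟩
        · rw [entry21 hg, h1]; rfl
        · rw [entry22 hg]
          apply h3
          simp only [Fin.coe_natAdd] at hj
          exact (Fin.lt_def).2 (by omega)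
    · intro i hi
      rcases fin_cases' i with ⟨a, rfl⟩ | ⟨a, rfl⟩
      · exfalso; have := a.isLt; simp only [Fin.coe_castAdd] at hi; omega
      · rw [entry22 hg]; exact h2 a
    · intro i j hi hj
      rcases fin_cases' i with ⟨a, rfl⟩ | ⟨a, rfl⟩
      · rcases fin_cases' j with ⟨b, rfl⟩ | ⟨b, rfl⟩
        · exfalso; have := b.isLt; simp only [Fin.coe_castAdd] at hj; omega
        · have hb0 : b = 0 := by
            apply Fin.ext
            simp only [Fin.coe_natAdd] at hj
            simp only [Fin.val_zero]
            omega
          subst hb0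
          rw [entry12 hg]; exact h4 a
      · exfalso; simp only [Fin.coe_natAdd] at hi; omega

lemma mem_Ngroup'_of {g : GL (Fin (r+m)) F} {K : Matrix (Fin m) (Fin m) F}
    (hK : UT K)
    (hg : Φ r m F (g : Matrix (Fin (r+m)) (Fin (r+m)) F) = fromBlocks 1 0 0 K) :
    g ∈ Ngroup' (r+m) r F := by
  constructor
  · intro i
    rcases fin_cases' i with ⟨a, rfl⟩ | ⟨a, rfl⟩
    · rw [entry11 hg, one_apply_eq]
    · rw [entry22 hg]; exact hK.1 a
  · intro i j hij hcond
    rcases fin_cases' i with ⟨a, rfl⟩ | ⟨a, rfl⟩ <;>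
      rcases fin_cases' j with ⟨b, rfl⟩ | ⟨b, rfl⟩
    · rw [entry11 hg]
      exact one_apply_ne (by simpa [Fin.ext_iff] using hij)
    · rw [entry12 hg]; rfl
    · rw [entry21 hg]; rfl
    · rw [entry22 hg]
      apply hK.2
      have hab : (a : ℕ) ≠ (b : ℕ) := by simpa [Fin.ext_iff] using hij
      have hnlt : ¬ ((a : ℕ) < (b : ℕ)) := by
        intro h
        exact hcond ⟨by simp, by simp only [Fin.coe_natAdd]; omega⟩
      exact (Fin.lt_def).2 (by omega)

lemma mem_Parab_21 {p : GL (Fin (r+m)) F} (hp : p ∈ Parab (r+m) r F) :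
    toBlocks₂₁ (Φ r m F (p : Matrix (Fin (r+m)) (Fin (r+m)) F)) = 0 := by
  ext a b
  rw [Φ21, hp]
  · rfl
  · simp
  · simpa using b.isLt


lemma fromBlocks_congr {A A' : Matrix (Fin r) (Fin r) F} {B B' : Matrix (Fin r) (Fin m) F}
    {C C' : Matrix (Fin m) (Fin r) F} {D D' : Matrix (Fin m) (Fin m) F}
    (hA : A = A') (hB : B = B') (hC : C = C') (hD : D = D') :
    fromBlocks A B C D = fromBlocks A' B' C' D' := by rw [hA, hB, hC, hD]

end RSaux

/-- The map `U_r × (N'_{n-r}\G'_{n-r}) → R_r\P_{r,n-r}`, `(u, N' g') ↦ R_r u g'`,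
is a well-defined bijection: (i) every `p ∈ P_{r,n-r}` lies in some coset `R_r u g'`;
(ii) if `R_r u₁ g'₁ = R_r u₂ g'₂` (i.e. `u₁ g'₁ (u₂ g'₂)⁻¹ ∈ R_r`) then `u₁ = u₂` and
`g'₁ (g'₂)⁻¹ ∈ N'_{n-r}`. -/
theorem RS_coset_decomposition_of_parabolic (n r : ℕ) (hn : r < n)
    (F : Type*) [Field F] :
    (∀ p : GL (Fin n) F, p ∈ Parab n r F →
      ∃ u ∈ Ugroup n r F, ∃ g' ∈ Ggroup' n r F, ∃ ρ ∈ RSgroup n r F, p = ρ * (u * g')) ∧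
    (∀ u₁ u₂ g₁' g₂' : GL (Fin n) F, u₁ ∈ Ugroup n r F → u₂ ∈ Ugroup n r F →
      g₁' ∈ Ggroup' n r F → g₂' ∈ Ggroup' n r F →
      (u₁ * g₁') * (u₂ * g₂')⁻¹ ∈ RSgroup n r F →
      u₁ = u₂ ∧ g₁' * g₂'⁻¹ ∈ Ngroup' n r F) := by

  obtain ⟨k, hk⟩ := Nat.exists_eq_add_of_lt hn
  obtain rfl : n = r + (k + 1) := by omega
  set m : ℕ := k + 1 with hm
  constructor
  · -- Part (i)
    intro p hp
    set P := RSaux.Φ r m F (p : Matrix (Fin (r+m)) (Fin (r+m)) F) with hPdef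
    set Q := RSaux.Φ r m F ((p⁻¹ : GL (Fin (r+m)) F) : Matrix (Fin (r+m)) (Fin (r+m)) F)
      with hQdef
    have hPQ : P * Q = 1 := by
      rw [hPdef, hQdef, ← _root_.map_mul, Units.mul_inv, _root_.map_one]
    have hQP : Q * P = 1 := by
      rw [hPdef, hQdef, ← _root_.map_mul, Units.inv_mul, _root_.map_one]
    set A := toBlocks₁₁ P with hA
    set B := toBlocks₁₂ P with hB
    set D := toBlocks₂₂ P with hD
    have h21 := RSaux.mem_Parab_21 hp
    have hP : P = fromBlocks A B 0 D := by
      conv_lhs => rw [← fromBlocks_toBlocks P]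
      rw [h21]
    set A' := toBlocks₁₁ Q with hA'
    set B' := toBlocks₁₂ Q with hB'
    set C' := toBlocks₂₁ Q with hC'
    set D' := toBlocks₂₂ Q with hD'
    have hQ : Q = fromBlocks A' B' C' D' := (fromBlocks_toBlocks Q).symm
    rw [hP, hQ, fromBlocks_multiply] at hQP hPQ
    obtain ⟨e1, _, e3, _⟩ := RSaux.blocks_of_eq_one hQP
    obtain ⟨_, _, _, f4⟩ := RSaux.blocks_of_eq_one hPQ
    simp only [Matrix.mul_zero, Matrix.zero_mul, add_zero, zero_add] at e1 e3 f4
    -- e1 : A' * A = 1, e3 : C' * A = 0, f4 : D * D' = 1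
    have hAA' : A * A' = 1 := mul_eq_one_comm.mp e1
    have hD'D : D' * D = 1 := mul_eq_one_comm.mp f4
    set c : Fin r → F := fun a => (A' * (B * D')) a 0 with hc
    set V := RSaux.colM m c with hV
    have hAV : A * V = RSaux.colM m (fun a => (B * D') a 0) := by
      have hfun : (fun a => ∑ x : Fin r, A a x * c x) = fun a => (B * D') a 0 := by
        funext a
        simp only [hc]
        rw [← Matrix.mul_apply, ← Matrix.mul_assoc, hAA', Matrix.one_mul]
      rw [hV, RSaux.mul_colM, hfun]
    set X := B * D' - A * V with hX
    have hX0 : ∀ a, X a 0 = 0 := by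
      intro a
      rw [hX, Matrix.sub_apply, hAV]
      simp [RSaux.colM]
    set Umat : Matrix (Fin r ⊕ Fin m) (Fin r ⊕ Fin m) F := fromBlocks 1 V 0 1 with hUmat
    set Uinv : Matrix (Fin r ⊕ Fin m) (Fin r ⊕ Fin m) F := fromBlocks 1 (-V) 0 1 with hUinv
    set Gmat : Matrix (Fin r ⊕ Fin m) (Fin r ⊕ Fin m) F := fromBlocks 1 0 0 D with hGmat
    set Ginv : Matrix (Fin r ⊕ Fin m) (Fin r ⊕ Fin m) F := fromBlocks 1 0 0 D' with hGinv
    set Rmat : Matrix (Fin r ⊕ Fin m) (Fin r ⊕ Fin m) F := fromBlocks A X 0 1 with hRmat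
    set Rinv : Matrix (Fin r ⊕ Fin m) (Fin r ⊕ Fin m) F :=
      fromBlocks A' (-(A' * X)) 0 1 with hRinv
    have hU1 : Umat * Uinv = 1 := by
      rw [hUmat, hUinv, fromBlocks_multiply, ← fromBlocks_one]
      exact RSaux.fromBlocks_congr (by simp) (by simp) (by simp) (by simp)
    have hU2 : Uinv * Umat = 1 := by
      rw [hUmat, hUinv, fromBlocks_multiply, ← fromBlocks_one]
      exact RSaux.fromBlocks_congr (by simp) (by simp) (by simp) (by simp)
    have hG1 : Gmat * Ginv = 1 := by
      rw [hGmat, hGinv, fromBlocks_multiply, ← fromBlocks_one]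
      exact RSaux.fromBlocks_congr (by simp) (by simp) (by simp) (by simp [f4])
    have hG2 : Ginv * Gmat = 1 := by
      rw [hGmat, hGinv, fromBlocks_multiply, ← fromBlocks_one]
      exact RSaux.fromBlocks_congr (by simp) (by simp) (by simp) (by simp [hD'D])
    have hR1 : Rmat * Rinv = 1 := by
      rw [hRmat, hRinv, fromBlocks_multiply, ← fromBlocks_one]
      refine RSaux.fromBlocks_congr (by simp [hAA']) ?_ (by simp) (by simp)
      rw [Matrix.mul_neg, ← Matrix.mul_assoc, hAA', Matrix.one_mul, Matrix.mul_one]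
      simp
    have hR2 : Rinv * Rmat = 1 := by
      rw [hRmat, hRinv, fromBlocks_multiply, ← fromBlocks_one]
      refine RSaux.fromBlocks_congr (by simp [e1]) ?_ (by simp) (by simp)
      simp
    have hRUG : Rmat * (Umat * Gmat) = P := by
      have hUG : Umat * Gmat = fromBlocks 1 (V * D) 0 D := by
        rw [hUmat, hGmat, fromBlocks_multiply]
        exact RSaux.fromBlocks_congr (by simp) (by simp) (by simp) (by simp)
      rw [hUG, hRmat, fromBlocks_multiply, hP]
      refine RSaux.fromBlocks_congr (by simp) ?_ (by simp) (by simp)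
      rw [hX, Matrix.sub_mul, Matrix.mul_assoc B D' D, hD'D, Matrix.mul_one, ← Matrix.mul_assoc]
      abel
    set ψ := (RSaux.Φ r m F).symm with hψ
    set u : GL (Fin (r+m)) F :=
      ⟨ψ Umat, ψ Uinv, by rw [← _root_.map_mul, hU1, _root_.map_one], by rw [← _root_.map_mul, hU2, _root_.map_one]⟩
      with hu
    set g' : GL (Fin (r+m)) F :=
      ⟨ψ Gmat, ψ Ginv, by rw [← _root_.map_mul, hG1, _root_.map_one], by rw [← _root_.map_mul, hG2, _root_.map_one]⟩
      with hg'
    set ρ : GL (Fin (r+m)) F :=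
      ⟨ψ Rmat, ψ Rinv, by rw [← _root_.map_mul, hR1, _root_.map_one], by rw [← _root_.map_mul, hR2, _root_.map_one]⟩
      with hρ
    have hΦu : RSaux.Φ r m F ((u : GL (Fin (r+m)) F) : Matrix (Fin (r+m)) (Fin (r+m)) F)
        = Umat := by
      show RSaux.Φ r m F (ψ Umat) = Umat
      rw [hψ, AlgEquiv.apply_symm_apply]
    have hΦg : RSaux.Φ r m F ((g' : GL (Fin (r+m)) F) : Matrix (Fin (r+m)) (Fin (r+m)) F)
        = Gmat := by
      show RSaux.Φ r m F (ψ Gmat) = Gmat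
      rw [hψ, AlgEquiv.apply_symm_apply]
    have hΦρ : RSaux.Φ r m F ((ρ : GL (Fin (r+m)) F) : Matrix (Fin (r+m)) (Fin (r+m)) F)
        = Rmat := by
      show RSaux.Φ r m F (ψ Rmat) = Rmat
      rw [hψ, AlgEquiv.apply_symm_apply]
    refine ⟨u, ?_, g', ?_, ρ, ?_, ?_⟩
    · exact RSaux.mem_Ugroup_iff.mpr ⟨c, by rw [hΦu, hUmat]⟩
    · exact RSaux.mem_Ggroup'_iff.mpr ⟨D, by rw [hΦg, hGmat]⟩
    · refine RSaux.mem_RSgroup_iff.mpr ⟨?_, ⟨?_, ?_⟩, ?_⟩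
      · rw [hΦρ, hRmat]; simp
      · intro a; rw [hΦρ, hRmat]; simp
      · intro a b hba
        rw [hΦρ, hRmat]
        simp only [toBlocks_fromBlocks₂₂]
        exact Matrix.one_apply_ne (ne_of_gt hba)
      · intro a
        rw [hΦρ, hRmat]
        simpa using hX0 a
    · apply Units.ext
      show (p : Matrix (Fin (r+m)) (Fin (r+m)) F) = ψ Rmat * (ψ Umat * ψ Gmat)
      rw [← _root_.map_mul, ← _root_.map_mul, hRUG, hPdef, hψ, AlgEquiv.symm_apply_apply]
  · -- Part (ii)
    intro u₁ u₂ g₁' g₂' hu₁ hu₂ hg₁ hg₂ hR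
    obtain ⟨c₁, hc₁⟩ := RSaux.mem_Ugroup_iff.mp hu₁
    obtain ⟨c₂, hc₂⟩ := RSaux.mem_Ugroup_iff.mp hu₂
    obtain ⟨D₁, hD₁⟩ := RSaux.mem_Ggroup'_iff.mp hg₁
    obtain ⟨D₂, hD₂⟩ := RSaux.mem_Ggroup'_iff.mp hg₂
    have hprod2 : RSaux.Φ r m F
        ((u₂ * g₂' : GL (Fin (r+m)) F) : Matrix (Fin (r+m)) (Fin (r+m)) F)
        = fromBlocks 1 (RSaux.colM m c₂ * D₂) 0 D₂ := by
      rw [Units.val_mul, _root_.map_mul, hc₂, hD₂, fromBlocks_multiply]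
      exact RSaux.fromBlocks_congr (by simp) (by simp) (by simp) (by simp)
    set Z := RSaux.Φ r m F
      (((u₂ * g₂')⁻¹ : GL (Fin (r+m)) F) : Matrix (Fin (r+m)) (Fin (r+m)) F) with hZ
    set Za := toBlocks₁₁ Z with hZa
    set Zb := toBlocks₁₂ Z with hZb'
    set Zc := toBlocks₂₁ Z with hZc
    set Zd := toBlocks₂₂ Z with hZd
    have hZ' : Z = fromBlocks Za Zb Zc Zd := (fromBlocks_toBlocks Z).symm
    have hZmul : Z * fromBlocks (1 : Matrix (Fin r) (Fin r) F) (RSaux.colM m c₂ * D₂) (0 : Matrix (Fin m) (Fin r) F) D₂ = 1 := by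
      rw [← hprod2, hZ, ← _root_.map_mul, Units.inv_mul, _root_.map_one]
    have hmulZ : fromBlocks (1 : Matrix (Fin r) (Fin r) F) (RSaux.colM m c₂ * D₂) (0 : Matrix (Fin m) (Fin r) F) D₂ * Z = 1 := by
      rw [← hprod2, hZ, ← _root_.map_mul, Units.mul_inv, _root_.map_one]
    rw [hZ', fromBlocks_multiply] at hZmul hmulZ
    obtain ⟨z1, z2, z3, z4⟩ := RSaux.blocks_of_eq_one hZmul
    obtain ⟨_, _, _, y4⟩ := RSaux.blocks_of_eq_one hmulZ
    simp only [Matrix.mul_zero, Matrix.mul_one, Matrix.zero_mul, Matrix.one_mul,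
      add_zero, zero_add] at z1 z2 z3 z4 y4
    -- z1 : Za = 1, z2 : Za * (colM c₂ * D₂) + Zb * D₂ = 0, z3 : Zc = 0,
    -- z4 : Zc * (colM c₂ * D₂) + Zd * D₂ = 1, y4 : D₂ * Zd = 1
    rw [z1, Matrix.one_mul] at z2
    rw [z3, Matrix.zero_mul, zero_add] at z4
    have hZbval : Zb = -(RSaux.colM m c₂) := by
      have hZbD : Zb * D₂ = -(RSaux.colM m c₂ * D₂) := by
        rw [eq_neg_iff_add_eq_zero, add_comm]
        exact z2
      calc Zb = Zb * (D₂ * Zd) := by rw [y4, Matrix.mul_one]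
        _ = Zb * D₂ * Zd := by rw [Matrix.mul_assoc]
        _ = -(RSaux.colM m c₂ * D₂) * Zd := by rw [hZbD]
        _ = -(RSaux.colM m c₂ * (D₂ * Zd)) := by rw [Matrix.neg_mul, Matrix.mul_assoc]
        _ = -(RSaux.colM m c₂) := by rw [y4, Matrix.mul_one]
    have hZform : Z = fromBlocks 1 (-(RSaux.colM m c₂)) 0 Zd := by
      rw [hZ', z1, z3, hZbval]
    have step1 : RSaux.Φ r m F
        ((u₁ * g₁' : GL (Fin (r+m)) F) : Matrix (Fin (r+m)) (Fin (r+m)) F)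
        = fromBlocks 1 (RSaux.colM m c₁ * D₁) 0 D₁ := by
      rw [Units.val_mul, _root_.map_mul, hc₁, hD₁, fromBlocks_multiply]
      exact RSaux.fromBlocks_congr (by simp) (by simp) (by simp) (by simp)
    have hx : RSaux.Φ r m F
        (((u₁ * g₁') * (u₂ * g₂')⁻¹ : GL (Fin (r+m)) F) :
          Matrix (Fin (r+m)) (Fin (r+m)) F)
        = fromBlocks 1 (RSaux.colM m c₁ * D₁ * Zd + -(RSaux.colM m c₂)) 0 (D₁ * Zd) := by
      rw [Units.val_mul, _root_.map_mul, step1, ← hZ, hZform, fromBlocks_multiply]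
      refine RSaux.fromBlocks_congr (by simp) ?_ (by simp) (by simp)
      rw [Matrix.one_mul]
      exact add_comm _ _
    obtain ⟨_, hUTK, hcol⟩ := RSaux.mem_RSgroup_iff.mp hR
    rw [hx] at hUTK hcol
    simp only [toBlocks_fromBlocks₂₂, toBlocks_fromBlocks₁₂] at hUTK hcol
    have hcc : c₁ = c₂ := by
      funext a
      have h := hcol a
      rw [Matrix.add_apply, Matrix.neg_apply, Matrix.mul_assoc,
        RSaux.colM_mul_col0, hUTK.1, mul_one] at h
      have hc2a : RSaux.colM m c₂ a 0 = c₂ a := by simp [RSaux.colM]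
      rw [hc2a, ← sub_eq_add_neg] at h
      exact sub_eq_zero.mp h
    constructor
    · exact Units.ext ((RSaux.Φ r m F).injective (by rw [hc₁, hc₂, hcc]))
    · set W := RSaux.Φ r m F
        ((g₂'⁻¹ : GL (Fin (r+m)) F) : Matrix (Fin (r+m)) (Fin (r+m)) F) with hW
      set Wa := toBlocks₁₁ W with hWa
      set Wb := toBlocks₁₂ W with hWb
      set Wc := toBlocks₂₁ W with hWc
      set Wd := toBlocks₂₂ W with hWd
      have hW' : W = fromBlocks Wa Wb Wc Wd := (fromBlocks_toBlocks W).symm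
      have hWmul : W * fromBlocks (1 : Matrix (Fin r) (Fin r) F) (0 : Matrix (Fin r) (Fin m) F) (0 : Matrix (Fin m) (Fin r) F) D₂ = 1 := by
        rw [← hD₂, hW, ← _root_.map_mul, Units.inv_mul, _root_.map_one]
      have hmulW : fromBlocks (1 : Matrix (Fin r) (Fin r) F) (0 : Matrix (Fin r) (Fin m) F) (0 : Matrix (Fin m) (Fin r) F) D₂ * W = 1 := by
        rw [← hD₂, hW, ← _root_.map_mul, Units.mul_inv, _root_.map_one]
      rw [hW', fromBlocks_multiply] at hWmul hmulW
      obtain ⟨w1, _, w3, w4⟩ := RSaux.blocks_of_eq_one hWmul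
      obtain ⟨_, x2, _, x4⟩ := RSaux.blocks_of_eq_one hmulW
      simp only [Matrix.mul_zero, Matrix.mul_one, Matrix.zero_mul, Matrix.one_mul,
        add_zero, zero_add] at w1 w3 w4 x2 x4
      -- w1 : Wa = 1, w3 : Wc = 0, w4 : Wd * D₂ = 1 (after w3), x2 : Wb = 0, x4 : D₂ * Wd = 1
      have hWdZd : Wd = Zd := by
        calc Wd = Wd * (D₂ * Zd) := by rw [y4, Matrix.mul_one]
          _ = Wd * D₂ * Zd := by rw [Matrix.mul_assoc]
          _ = Zd := by rw [w4, Matrix.one_mul]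
      have hWform : RSaux.Φ r m F
          ((g₂'⁻¹ : GL (Fin (r+m)) F) : Matrix (Fin (r+m)) (Fin (r+m)) F)
          = fromBlocks 1 0 0 Zd := by
        rw [← hW, hW', w1, x2, w3, hWdZd]
      have hgg : RSaux.Φ r m F
          ((g₁' * g₂'⁻¹ : GL (Fin (r+m)) F) : Matrix (Fin (r+m)) (Fin (r+m)) F)
          = fromBlocks 1 0 0 (D₁ * Zd) := by
        rw [Units.val_mul, _root_.map_mul, hD₁, hWform, fromBlocks_multiply]
        exact RSaux.fromBlocks_congr (by simp) (by simp) (by simp) (by simp)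
      exact RSaux.mem_Ngroup'_of hUTK hgg
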